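/- (Hyperdeterminantal total positivity of the generalized hypergeometric kernel.) Let p, q be nonnegative integers with either p ≤ q, or p = q + 1. Let a_1,…,a_p ≥ 0 and b_1,…,b_q > 0 be real numbers, and define F(z) = ∑_{i=0}^{∞} ( (a_1)_i ⋯ (a_p)_i / ((b_1)_i ⋯ (b_q)_i) ) z^i / i!. Let m, n be positive integers and for k = 1,…,2m let x_k = (x_{k,1},…,x_{k,n}) ∈ ℝ^n satisfy x_{k,1} > ⋯ > x_{k,n} ≥ 0; if p = q + 1 assume additionally x_{1,1} x_{2,1} ⋯ x_{2m,1} < 1. Then the hyperdeterminant Det( F(x_{1,r_1} x_{2,r_2} ⋯ x_{2m,r_{2m}}) )_{1≤r_1,…,r_{2m}≤n} is nonnegative. -/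

import Mathlib

open scoped BigOperators

/-- Cayley's first hyperdeterminant of a real `2m`-dimensional array of size `n`
in each direction. -/
noncomputable def hyperDet (m n : ℕ) (A : (Fin (2 * m) → Fin n) → ℝ) : ℝ :=
  ((n.factorial : ℕ) : ℝ)⁻¹ *
    ∑ σ : Fin (2 * m) → Equiv.Perm (Fin n),
      (∏ k : Fin (2 * m), ((Equiv.Perm.sign (σ k) : ℤ) : ℝ)) *
        ∏ j : Fin n, A (fun k => σ k j)

/-- The classical rising factorial `(a)_i = a(a+1)⋯(a+i-1)`. -/
noncomputable def risingFactorial (a : ℝ) (i : ℕ) : ℝ :=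
  ∏ t ∈ Finset.range i, (a + t)

/-- The classical generalized hypergeometric series
`pFq(a₁,…,a_p; b₁,…,b_q; z) = ∑_{i≥0} ((a₁)_i ⋯ (a_p)_i / ((b₁)_i ⋯ (b_q)_i)) z^i / i!`. -/
noncomputable def pFq (p q : ℕ) (a : Fin p → ℝ) (b : Fin q → ℝ) (z : ℝ) : ℝ :=
  ∑' i : ℕ, ((∏ s : Fin p, risingFactorial (a s) i) / (∏ t : Fin q, risingFactorial (b t) i)) *
    z ^ i / (Nat.factorial i : ℝ)



open Polynomial Finset Matrix Filter
set_option maxHeartbeats 1000000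

lemma aux_support_X_mul (Q : ℝ[X]) : (X * Q).support.card = Q.support.card := by
  apply Finset.card_nbij' (fun n => n - 1) (fun n => n + 1)
  · intro n hn
    simp only [mem_support_iff] at hn ⊢
    match n with
    | 0 => simp at hn
    | n+1 => simpa [coeff_X_mul] using hn
  · intro n hn
    simp only [mem_support_iff] at hn ⊢
    simpa [coeff_X_mul] using hn
  · intro n hn
    simp only [Finset.mem_coe, mem_support_iff] at hn
    match n with
    | 0 => simp at hn
    | n+1 => simp
  · intro n hn; simp

lemma aux_support_derivative_card (P : ℝ[X]) (h0 : P.coeff 0 ≠ 0) :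
    (derivative P).support.card + 1 = P.support.card := by
  have h : (derivative P).support.card = (P.support.erase 0).card := by
    apply Finset.card_nbij (fun n => n + 1)
    · intro n hn
      rw [Finset.mem_coe, Polynomial.mem_support_derivative] at hn
      simp only [Finset.mem_coe, Finset.mem_erase]
      exact ⟨by omega, hn⟩
    · intro a _ b _ hab; dsimp only at hab; omega
    · intro n hn
      simp only [Finset.coe_erase, Set.mem_diff, Finset.mem_coe, mem_support_iff,
        Set.mem_singleton_iff] at hn
      refine ⟨n - 1, ?_, by show n - 1 + 1 = n; omega⟩
      have hn0 : n ≠ 0 := hn.2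
      simp only [Finset.mem_coe, Polynomial.mem_support_derivative]
      have : n - 1 + 1 = n := by omega
      rw [this]
      simpa using hn.1
  rw [h, Finset.card_erase_of_mem (by simpa using h0)]
  have h1 : 0 ∈ P.support := by simpa using h0
  have h2 : 1 ≤ P.support.card := Finset.card_pos.2 ⟨0, h1⟩
  omega

/-- A nonzero real polynomial has fewer distinct positive roots than nonzero terms. -/
lemma aux_roots_lt_support_aux : ∀ d (P : ℝ[X]), P ≠ 0 → P.natDegree = d →
    (P.roots.toFinset.filter (fun r => 0 < r)).card < P.support.card := by
  intro d
  induction d using Nat.strong_induction_on with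
  | _ d IH =>
  intro P hP hd
  rcases Nat.eq_zero_or_pos P.natDegree with hdeg | hdeg
  · -- constant
    obtain ⟨c, rfl⟩ := Polynomial.natDegree_eq_zero.1 hdeg
    have hc : c ≠ 0 := by simpa using hP
    simp [Polynomial.roots_C, Polynomial.support_C hc]
  rcases eq_or_ne (P.coeff 0) 0 with h0 | h0
  · -- P = X * Q
    obtain ⟨Q, rfl⟩ := (Polynomial.X_dvd_iff.2 h0)
    have hQ : Q ≠ 0 := fun h => hP (by simp [h])
    have hroots : (X * Q).roots = (X : ℝ[X]).roots + Q.roots :=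
      Polynomial.roots_mul (mul_ne_zero Polynomial.X_ne_zero hQ)
    have hfilter : ((X * Q).roots.toFinset.filter (fun r => 0 < r))
        = (Q.roots.toFinset.filter (fun r => 0 < r)) := by
      ext r
      simp only [Finset.mem_filter, Multiset.mem_toFinset, hroots, Multiset.mem_add,
        Polynomial.roots_X, Multiset.mem_singleton]
      constructor
      · rintro ⟨h | h, hr⟩
        · exact absurd hr (by simp [h])
        · exact ⟨h, hr⟩
      · rintro ⟨h, hr⟩; exact ⟨Or.inr h, hr⟩
    rw [hfilter, aux_support_X_mul]
    have hdQ : Q.natDegree < d := by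
      rw [← hd, Polynomial.natDegree_X_mul hQ]; omega
    exact IH Q.natDegree hdQ Q hQ rfl
  · -- coeff 0 ≠ 0, use derivative
    have hP' : derivative P ≠ 0 := by
      intro h
      have := Polynomial.natDegree_eq_zero_of_derivative_eq_zero h
      omega
    have hint : (P.roots.toFinset.filter (fun r => 0 < r)).card ≤
        (((derivative P).roots.toFinset.filter (fun r => 0 < r)) \
          (P.roots.toFinset.filter (fun r => 0 < r))).card + 1 := by
      apply Finset.card_le_diff_of_interleaved
      intro x hx y hy hxy _
      simp only [Finset.mem_filter, Multiset.mem_toFinset, Polynomial.mem_roots hP] at hx hy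
      obtain ⟨z, hz1, hz2⟩ := exists_deriv_eq_zero hxy P.continuousOn
        (hx.1.trans hy.1.symm)
      refine ⟨z, ?_, hz1⟩
      simp only [Finset.mem_filter, Multiset.mem_toFinset, Polynomial.mem_roots hP']
      exact ⟨by rwa [Polynomial.IsRoot, ← P.deriv], lt_trans hx.2 hz1.1⟩
    have h2 : (((derivative P).roots.toFinset.filter (fun r => 0 < r)) \
        (P.roots.toFinset.filter (fun r => 0 < r))).card ≤
        ((derivative P).roots.toFinset.filter (fun r => 0 < r)).card :=
      Finset.card_mono Finset.sdiff_subset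
    have hd' : (derivative P).natDegree < d := by
      rw [← hd]; exact Polynomial.natDegree_derivative_lt (by omega)
    have := IH (derivative P).natDegree hd' (derivative P) hP' rfl
    have hsupp := aux_support_derivative_card P h0
    omega

lemma aux_roots_lt_support (P : ℝ[X]) (hP : P ≠ 0) :
    (P.roots.toFinset.filter (fun r => 0 < r)).card < P.support.card :=
  aux_roots_lt_support_aux P.natDegree P hP rfl


lemma aux_vdm_ne_zero {n : ℕ} (μ : Fin n → ℕ) (hμ : Function.Injective μ)
    (x : Fin n → ℝ) (hx : Function.Injective x) (hpos : ∀ r, 0 < x r) :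
    (Matrix.of fun r j : Fin n => x r ^ μ j).det ≠ 0 := by
  intro hdet
  obtain ⟨v, hv0, hv⟩ := Matrix.exists_mulVec_eq_zero_iff.2 hdet
  set P : ℝ[X] := ∑ j : Fin n, Polynomial.C (v j) * Polynomial.X ^ μ j with hP
  have hcoeff : ∀ j : Fin n, P.coeff (μ j) = v j := by
    intro j
    rw [hP, Polynomial.finset_sum_coeff]
    rw [Finset.sum_eq_single j]
    · simp [Polynomial.coeff_C_mul_X_pow]
    · intro j' _ hj'
      rw [Polynomial.coeff_C_mul_X_pow]
      simp only [ite_eq_right_iff]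
      intro h; exact absurd (hμ h.symm) hj'
    · simp
  have hPne : P ≠ 0 := by
    obtain ⟨j, hj⟩ := Function.ne_iff.1 hv0
    intro h
    apply hj
    have : v j = 0 := by rw [← hcoeff j, h, Polynomial.coeff_zero]
    simp [this]
  have heval : ∀ r : Fin n, P.eval (x r) = 0 := by
    intro r
    have := congrFun hv r
    simp only [Matrix.mulVec, dotProduct, Matrix.of_apply, Pi.zero_apply] at this
    rw [hP]
    simp only [Polynomial.eval_finset_sum, Polynomial.eval_mul, Polynomial.eval_C,
      Polynomial.eval_pow, Polynomial.eval_X]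
    rw [← this]
    exact Finset.sum_congr rfl (fun j _ => by ring)
  -- the x r are n distinct positive roots
  have hsub : (Finset.univ.image x) ⊆ P.roots.toFinset.filter (fun r => 0 < r) := by
    intro r hr
    obtain ⟨i, _, rfl⟩ := Finset.mem_image.1 hr
    simp only [Finset.mem_filter, Multiset.mem_toFinset, Polynomial.mem_roots hPne]
    exact ⟨heval i, hpos i⟩
  have hcard1 : n ≤ (P.roots.toFinset.filter (fun r => 0 < r)).card := by
    have := Finset.card_le_card hsub
    rwa [Finset.card_image_of_injective _ hx, Finset.card_univ, Fintype.card_fin] at this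
  have hsupp : P.support ⊆ Finset.univ.image μ := by
    intro k hk
    rw [Polynomial.mem_support_iff] at hk
    by_contra hkim
    apply hk
    rw [hP, Polynomial.finset_sum_coeff]
    apply Finset.sum_eq_zero
    intro j _
    rw [Polynomial.coeff_C_mul_X_pow]
    simp only [ite_eq_right_iff]
    intro h
    exact absurd (Finset.mem_image.2 ⟨j, Finset.mem_univ j, h.symm⟩) hkim
  have hcard2 : P.support.card ≤ n := by
    calc P.support.card ≤ (Finset.univ.image μ).card := Finset.card_le_card hsupp
    _ ≤ Finset.univ.card := Finset.card_image_le
    _ = n := by simp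
  have := aux_roots_lt_support P hPne
  omega


lemma aux_exists_sign {n : ℕ} (μ : Fin n → ℕ) (hμ : Function.Injective μ) :
    ∃ ε : ℝ, ε ^ 2 = 1 ∧ ∀ x : Fin n → ℝ, StrictAnti x → (∀ r, 0 ≤ x r) →
      0 ≤ ε * (Matrix.of fun r j : Fin n => x r ^ μ j).det := by
  set x₀ : Fin n → ℝ := fun r => (n : ℝ) - (r : ℝ) with hx₀
  have hx₀anti : StrictAnti x₀ := by
    intro r r' h
    simp only [hx₀]
    have : (r : ℝ) < (r' : ℝ) := by exact_mod_cast h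
    linarith
  have hx₀pos : ∀ r, 0 < x₀ r := by
    intro r
    simp only [hx₀]
    have : (r : ℝ) < (n : ℝ) := by exact_mod_cast r.isLt
    linarith
  set d₀ : ℝ := (Matrix.of fun r j : Fin n => x₀ r ^ μ j).det with hd₀
  have hd₀ne : d₀ ≠ 0 := aux_vdm_ne_zero μ hμ x₀ hx₀anti.injective hx₀pos
  set ε : ℝ := if 0 < d₀ then 1 else -1 with hε
  have hε2 : ε ^ 2 = 1 := by
    rw [hε]; split <;> norm_num
  have hεd₀ : 0 < ε * d₀ := by
    rcases lt_or_gt_of_ne hd₀ne with h | h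
    · have hε1 : ε = -1 := by rw [hε, if_neg (not_lt.2 (le_of_lt h))]
      rw [hε1]; linarith
    · have hε1 : ε = 1 := by rw [hε, if_pos h]
      rw [hε1]; linarith
  -- key segment claim
  have hseg : ∀ y : Fin n → ℝ, StrictAnti y → (∀ r, 0 < y r) →
      0 < ε * (Matrix.of fun r j : Fin n => y r ^ μ j).det := by
    intro y hyanti hypos
    set w : ℝ → Fin n → ℝ := fun t r => (1 - t) * x₀ r + t * y r with hw
    have hwmem : ∀ t ∈ Set.Icc (0:ℝ) 1, StrictAnti (w t) ∧ ∀ r, 0 < w t r := by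
      rintro t ⟨ht0, ht1⟩
      constructor
      · intro r r' h
        have h1 : x₀ r' < x₀ r := hx₀anti h
        have h2 : y r' < y r := hyanti h
        rcases eq_or_lt_of_le ht0 with rfl | ht0'
        · simpa [hw] using h1
        rcases eq_or_lt_of_le ht1 with rfl | ht1'
        · simpa [hw] using h2
        simp only [hw]
        nlinarith
      · intro r
        have h1 := hx₀pos r
        have h2 := hypos r
        simp only [hw]
        rcases eq_or_lt_of_le ht0 with rfl | ht0'
        · simpa using h1
        have ha : 0 < t * y r := mul_pos ht0' h2
        have hb : 0 ≤ (1 - t) * x₀ r := mul_nonneg (by linarith) h1.le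
        linarith
    set f : ℝ → ℝ := fun t => ε * (Matrix.of fun r j : Fin n => w t r ^ μ j).det with hf
    have hcont : Continuous f := by
      apply Continuous.mul continuous_const
      apply Continuous.matrix_det
      apply continuous_matrix
      intro r j
      simp only [Matrix.of_apply, hw]
      fun_prop
    have hne : ∀ t ∈ Set.Icc (0:ℝ) 1, f t ≠ 0 := by
      intro t ht h0
      have hmem := hwmem t ht
      have := aux_vdm_ne_zero μ hμ (w t) hmem.1.injective hmem.2
      have hεne : ε ≠ 0 := by rw [hε]; split <;> norm_num
      rw [hf] at h0
      simp only at h0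
      rcases mul_eq_zero.1 h0 with h | h
      · exact hεne h
      · exact this h
    by_contra hcon
    push_neg at hcon
    have hf1 : f 1 ≠ 0 := hne 1 (by norm_num)
    have hf1' : f 1 < 0 := by
      rcases lt_or_eq_of_le hcon with h | h
      · have : f 1 = ε * (Matrix.of fun r j : Fin n => y r ^ μ j).det := by
          simp [hf, hw]
        rw [this]; exact h
      · exact absurd (by
          have : f 1 = ε * (Matrix.of fun r j : Fin n => y r ^ μ j).det := by
            simp [hf, hw]
          rw [this, ← h]) hf1
    have hf0 : 0 < f 0 := by
      have : f 0 = ε * d₀ := by simp [hf, hw, hd₀]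
      rw [this]; exact hεd₀
    have : (0:ℝ) ∈ Set.Icc (f 1) (f 0) := ⟨le_of_lt hf1', le_of_lt hf0⟩
    obtain ⟨t, ht, hft⟩ := intermediate_value_Icc' (by norm_num : (0:ℝ) ≤ 1)
      hcont.continuousOn this
    exact hne t ht hft
  -- close up: allow x with only nonneg values
  refine ⟨ε, hε2, ?_⟩
  intro x hxanti hxnn
  set F : ℝ → ℝ := fun δ => ε * (Matrix.of fun r j : Fin n => (x r + δ) ^ μ j).det with hF
  have hFcont : Continuous F := by
    apply Continuous.mul continuous_const
    apply Continuous.matrix_det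
    apply continuous_matrix
    intro r j
    simp only [Matrix.of_apply]
    fun_prop
  have hFpos : ∀ δ : ℝ, 0 < δ → 0 < F δ := by
    intro δ hδ
    apply hseg
    · intro r r' h
      have := hxanti h
      dsimp only
      linarith
    · intro r
      have := hxnn r
      linarith
  have htend : Filter.Tendsto F (nhdsWithin 0 (Set.Ioi 0)) (nhds (F 0)) :=
    (hFcont.tendsto 0).mono_left nhdsWithin_le_nhds
  have hev : ∀ᶠ δ in nhdsWithin (0:ℝ) (Set.Ioi 0), 0 ≤ F δ := by
    filter_upwards [self_mem_nhdsWithin] with δ hδ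
    exact le_of_lt (hFpos δ hδ)
  have : 0 ≤ F 0 := ge_of_tendsto htend hev
  simpa [hF] using this


lemma aux_prod_det_nonneg {m n : ℕ} (hm : 0 < m) (x : Fin (2 * m) → Fin n → ℝ)
    (hanti : ∀ k, StrictAnti (x k)) (hnn : ∀ k r, 0 ≤ x k r) (i : Fin n → ℕ) :
    0 ≤ ∏ k : Fin (2 * m), (Matrix.of fun r j : Fin n => x k r ^ i j).det := by
  by_cases hinj : Function.Injective i
  · obtain ⟨ε, hε2, hε⟩ := aux_exists_sign i hinj
    have key : ∀ k : Fin (2 * m), (Matrix.of fun r j : Fin n => x k r ^ i j).det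
        = ε * (ε * (Matrix.of fun r j : Fin n => x k r ^ i j).det) := by
      intro k
      rw [← mul_assoc, ← sq, hε2, one_mul]
    calc (0:ℝ) ≤ ε ^ (2 * m) * ∏ k : Fin (2 * m),
          (ε * (Matrix.of fun r j : Fin n => x k r ^ i j).det) := by
          apply mul_nonneg
          · rw [pow_mul, hε2, one_pow]; norm_num
          · exact Finset.prod_nonneg fun k _ => hε (x k) (hanti k) (hnn k)
      _ = ∏ k : Fin (2 * m), (Matrix.of fun r j : Fin n => x k r ^ i j).det := by
          have hcard : ε ^ (2 * m) = ∏ _k : Fin (2 * m), ε := by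
            rw [Finset.prod_const, Finset.card_univ, Fintype.card_fin]
          rw [hcard, ← Finset.prod_mul_distrib]
          exact Finset.prod_congr rfl fun k _ => by
            rw [← mul_assoc, ← sq, hε2, one_mul]
  · obtain ⟨j, j', hij, hne⟩ : ∃ j j', i j = i j' ∧ j ≠ j' := by
      simp only [Function.Injective, not_forall] at hinj
      obtain ⟨j, j', h1, h2⟩ := hinj
      exact ⟨j, j', h1, h2⟩
    have hzero : ∀ k : Fin (2 * m), (Matrix.of fun r j : Fin n => x k r ^ i j).det = 0 := by
      intro k
      apply Matrix.det_zero_of_column_eq hne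
      intro r
      simp [hij]
    rw [Finset.prod_eq_zero (Finset.mem_univ (⟨0, by omega⟩ : Fin (2 * m)))
      (hzero _)]



lemma aux_hyperDet_poly_nonneg {m n : ℕ} (hm : 0 < m)
    (x : Fin (2 * m) → Fin n → ℝ)
    (hanti : ∀ k, StrictAnti (x k)) (hnn : ∀ k r, 0 ≤ x k r)
    (d : ℕ → ℝ) (hd : ∀ i, 0 ≤ d i) (N : ℕ) :
    0 ≤ hyperDet m n (fun r => ∑ i ∈ Finset.range N, d i * ∏ k, x k (r k) ^ i) := by
  rw [hyperDet]
  apply mul_nonneg (by positivity)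
  have key : ∑ σ : Fin (2 * m) → Equiv.Perm (Fin n),
      (∏ k : Fin (2 * m), ((Equiv.Perm.sign (σ k) : ℤ) : ℝ)) *
        ∏ j : Fin n, (∑ i ∈ Finset.range N, d i * ∏ k, x k (σ k j) ^ i)
      = ∑ y ∈ Fintype.piFinset (fun _ : Fin n => Finset.range N),
          (∏ j, d (y j)) *
            ∏ k : Fin (2 * m), (Matrix.of fun r j : Fin n => x k r ^ y j).det := by
    have h1 : ∀ σ : Fin (2 * m) → Equiv.Perm (Fin n),
        ∏ j : Fin n, (∑ i ∈ Finset.range N, d i * ∏ k, x k (σ k j) ^ i)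
        = ∑ y ∈ Fintype.piFinset (fun _ : Fin n => Finset.range N),
            ∏ j, (d (y j) * ∏ k, x k (σ k j) ^ (y j)) := fun σ =>
      Finset.prod_univ_sum _ _
    calc ∑ σ : Fin (2 * m) → Equiv.Perm (Fin n),
          (∏ k, ((Equiv.Perm.sign (σ k) : ℤ) : ℝ)) *
            ∏ j : Fin n, (∑ i ∈ Finset.range N, d i * ∏ k, x k (σ k j) ^ i)
        = ∑ σ : Fin (2 * m) → Equiv.Perm (Fin n),
            ∑ y ∈ Fintype.piFinset (fun _ : Fin n => Finset.range N),
              (∏ k, ((Equiv.Perm.sign (σ k) : ℤ) : ℝ)) *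
                ∏ j, (d (y j) * ∏ k, x k (σ k j) ^ (y j)) := by
          refine Finset.sum_congr rfl fun σ _ => ?_
          rw [h1 σ, Finset.mul_sum]
      _ = ∑ y ∈ Fintype.piFinset (fun _ : Fin n => Finset.range N),
            ∑ σ : Fin (2 * m) → Equiv.Perm (Fin n),
              (∏ k, ((Equiv.Perm.sign (σ k) : ℤ) : ℝ)) *
                ∏ j, (d (y j) * ∏ k, x k (σ k j) ^ (y j)) := Finset.sum_comm
      _ = ∑ y ∈ Fintype.piFinset (fun _ : Fin n => Finset.range N),
            (∏ j, d (y j)) *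
              ∏ k : Fin (2 * m), (Matrix.of fun r j : Fin n => x k r ^ y j).det := by
          refine Finset.sum_congr rfl fun y _ => ?_
          have h2 : ∀ σ : Fin (2 * m) → Equiv.Perm (Fin n),
              ∏ j, (d (y j) * ∏ k, x k (σ k j) ^ (y j))
              = (∏ j, d (y j)) * ∏ k, ∏ j, x k (σ k j) ^ (y j) := by
            intro σ
            rw [Finset.prod_mul_distrib, Finset.prod_comm]
          have h3 : ∑ σ : Fin (2 * m) → Equiv.Perm (Fin n),
              (∏ k, ((Equiv.Perm.sign (σ k) : ℤ) : ℝ)) *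
                ∏ j, (d (y j) * ∏ k, x k (σ k j) ^ (y j))
              = (∏ j, d (y j)) * ∑ σ : Fin (2 * m) → Equiv.Perm (Fin n),
                  ∏ k, (((Equiv.Perm.sign (σ k) : ℤ) : ℝ) *
                    ∏ j, x k (σ k j) ^ (y j)) := by
            rw [Finset.mul_sum]
            refine Finset.sum_congr rfl fun σ _ => ?_
            rw [h2 σ, Finset.prod_mul_distrib]
            ring
          rw [h3]
          congr 1
          have h4 : ∑ σ : Fin (2 * m) → Equiv.Perm (Fin n),
              ∏ k, (((Equiv.Perm.sign (σ k) : ℤ) : ℝ) * ∏ j, x k (σ k j) ^ (y j))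
              = ∏ k : Fin (2 * m), ∑ τ : Equiv.Perm (Fin n),
                  (((Equiv.Perm.sign τ : ℤ) : ℝ) * ∏ j, x k (τ j) ^ (y j)) := by
            rw [Finset.prod_univ_sum (fun _ => Finset.univ)
              (fun k τ => ((Equiv.Perm.sign τ : ℤ) : ℝ) * ∏ j, x k (τ j) ^ (y j))]
            rw [Fintype.piFinset_univ]
          rw [h4]
          refine Finset.prod_congr rfl fun k _ => ?_
          rw [Matrix.det_apply']
          rfl
  rw [key]
  apply Finset.sum_nonneg
  intro y _
  exact mul_nonneg (Finset.prod_nonneg fun j _ => hd (y j))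
    (aux_prod_det_nonneg hm x hanti hnn y)



lemma risingFactorial_succ (a : ℝ) (i : ℕ) :
    risingFactorial a (i + 1) = risingFactorial a i * (a + i) := by
  rw [risingFactorial, Finset.prod_range_succ, risingFactorial]

lemma risingFactorial_nonneg {a : ℝ} (ha : 0 ≤ a) (i : ℕ) : 0 ≤ risingFactorial a i :=
  Finset.prod_nonneg fun t _ => by positivity

lemma risingFactorial_pos {a : ℝ} (ha : 0 < a) (i : ℕ) : 0 < risingFactorial a i :=
  Finset.prod_pos fun t _ => by positivity

lemma aux_one_ratio (c : ℝ) {e : ℝ} (he : 0 < e) :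
    Tendsto (fun i : ℕ => (c + i) / (e + i)) atTop (nhds 1) := by
  have h1 : Tendsto (fun i : ℕ => e + (i : ℝ)) atTop atTop :=
    tendsto_atTop_add_const_left _ _ tendsto_natCast_atTop_atTop
  have h2 : Tendsto (fun i : ℕ => (c - e) / (e + i)) atTop (nhds 0) :=
    Tendsto.div_atTop tendsto_const_nhds h1
  have h3 : Tendsto (fun i : ℕ => 1 + (c - e) / (e + i)) atTop (nhds (1 + 0)) :=
    tendsto_const_nhds.add h2
  rw [add_zero] at h3
  apply Tendsto.congr _ h3
  intro i
  have hne : e + (i : ℝ) ≠ 0 := by positivity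
  field_simp
  ring

lemma aux_summable (p q : ℕ) (hpq : p ≤ q ∨ p = q + 1)
    (a : Fin p → ℝ) (b : Fin q → ℝ) (ha : ∀ s, 0 ≤ a s) (hb : ∀ t, 0 < b t)
    (z Z : ℝ) (hz0 : 0 ≤ z) (hzZ : z ≤ Z) (hZ : p = q + 1 → Z < 1) :
    Summable (fun i : ℕ =>
      ((∏ s : Fin p, risingFactorial (a s) i) / (∏ t : Fin q, risingFactorial (b t) i)) *
        z ^ i / (Nat.factorial i : ℝ)) := by
  set f : ℕ → ℝ := fun i =>
    ((∏ s : Fin p, risingFactorial (a s) i) / (∏ t : Fin q, risingFactorial (b t) i)) *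
      z ^ i / (Nat.factorial i : ℝ) with hf
  have hfnn : ∀ i, 0 ≤ f i := by
    intro i
    have h1 : 0 ≤ ∏ s : Fin p, risingFactorial (a s) i :=
      Finset.prod_nonneg fun s _ => risingFactorial_nonneg (ha s) i
    have h2 : 0 < ∏ t : Fin q, risingFactorial (b t) i :=
      Finset.prod_pos fun t _ => risingFactorial_pos (hb t) i
    have h3 : (0:ℝ) < Nat.factorial i := by exact_mod_cast Nat.factorial_pos i
    positivity
  -- recurrence
  have hPb : ∀ i : ℕ, (0:ℝ) < ∏ t : Fin q, (b t + i) := fun i =>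
    Finset.prod_pos fun t _ => by have := hb t; positivity
  have hrec : ∀ i : ℕ, f (i + 1) =
      f i * (z * ((∏ s : Fin p, (a s + i)) / ((∏ t : Fin q, (b t + i)) * (i + 1)))) := by
    intro i
    rw [hf]
    simp only
    have e1 : ∏ s : Fin p, risingFactorial (a s) (i + 1)
        = (∏ s : Fin p, risingFactorial (a s) i) * ∏ s : Fin p, (a s + i) := by
      rw [← Finset.prod_mul_distrib]
      exact Finset.prod_congr rfl fun s _ => risingFactorial_succ _ _
    have e2 : ∏ t : Fin q, risingFactorial (b t) (i + 1)
        = (∏ t : Fin q, risingFactorial (b t) i) * ∏ t : Fin q, (b t + i) := by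
      rw [← Finset.prod_mul_distrib]
      exact Finset.prod_congr rfl fun t _ => risingFactorial_succ _ _
    have h2 : (0:ℝ) < ∏ t : Fin q, risingFactorial (b t) i :=
      Finset.prod_pos fun t _ => risingFactorial_pos (hb t) i
    have h3 : (0:ℝ) < Nat.factorial i := by exact_mod_cast Nat.factorial_pos i
    have h4 : ((i:ℝ) + 1) ≠ 0 := by positivity
    rw [e1, e2, pow_succ, Nat.factorial_succ]
    push_cast
    field_simp
  -- find r < 1 and eventual ratio bound
  obtain ⟨r, hr0, hr1, hev⟩ : ∃ r : ℝ, 0 ≤ r ∧ r < 1 ∧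
      ∀ᶠ i : ℕ in atTop,
        z * ((∏ s : Fin p, (a s + i)) / ((∏ t : Fin q, (b t + i)) * (i + 1))) ≤ r := by
    rcases hpq with hple | hpeq
    · -- p ≤ q : ratio bounded by C/(i+1)
      set Ca : ℝ := ∏ s : Fin p, (a s + 1) with hCa
      set Cb : ℝ := ∏ t : Fin q, min (b t) 1 with hCb
      have hCa0 : 0 < Ca := Finset.prod_pos fun s _ => by have := ha s; linarith
      have hCb0 : 0 < Cb := Finset.prod_pos fun t _ => lt_min (hb t) one_pos
      refine ⟨1/2, by norm_num, by norm_num, ?_⟩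
      rw [eventually_atTop]
      obtain ⟨M, hM⟩ := exists_nat_gt (2 * z * Ca / Cb)
      refine ⟨M, fun i hi => ?_⟩
      have hi1 : (0:ℝ) < (i:ℝ) + 1 := by positivity
      have hiM : (M:ℝ) ≤ i := by exact_mod_cast hi
      have hnum : (∏ s : Fin p, (a s + i)) ≤ Ca * ((i:ℝ) + 1) ^ p := by
        have hpow : ((i:ℝ)+1)^p = ∏ _s : Fin p, ((i:ℝ)+1) := by
          rw [Finset.prod_const, Finset.card_univ, Fintype.card_fin]
        rw [hCa, hpow, ← Finset.prod_mul_distrib]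
        apply Finset.prod_le_prod
        · intro s _; have := ha s; positivity
        · intro s _
          have h5 := ha s
          have h6 : (0:ℝ) ≤ i := Nat.cast_nonneg i
          nlinarith
      have hden : Cb * ((i:ℝ) + 1) ^ q ≤ ∏ t : Fin q, (b t + i) := by
        have hpow : ((i:ℝ)+1)^q = ∏ _t : Fin q, ((i:ℝ)+1) := by
          rw [Finset.prod_const, Finset.card_univ, Fintype.card_fin]
        rw [hCb, hpow, ← Finset.prod_mul_distrib]
        apply Finset.prod_le_prod
        · intro t _
          have := hb t
          have : (0:ℝ) < min (b t) 1 := lt_min this one_pos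
          positivity
        · intro t _
          have h5 := hb t
          have h6 : (0:ℝ) ≤ i := Nat.cast_nonneg i
          rcases le_total (b t) 1 with h | h
          · rw [min_eq_left h]; nlinarith
          · rw [min_eq_right h]; nlinarith
      -- combine
      have hq : ((i:ℝ)+1)^p ≤ ((i:ℝ)+1)^q :=
        pow_le_pow_right₀ (by linarith) hple
      have hPa0 : (0:ℝ) ≤ ∏ s : Fin p, (a s + i) :=
        Finset.prod_nonneg fun s _ => by have := ha s; positivity
      have hPbi := hPb i
      have hpq0 : (0:ℝ) ≤ ((i:ℝ)+1)^q := by positivity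
      rw [← mul_div_assoc, div_le_iff₀ (by positivity)]
      have k1 : z * (∏ s : Fin p, (a s + i)) ≤ z * (Ca * ((i:ℝ)+1)^q) := by
        apply mul_le_mul_of_nonneg_left _ hz0
        exact hnum.trans (by nlinarith)
      have k2 : Cb * ((i:ℝ)+1)^q * ((i:ℝ)+1) ≤ (∏ t : Fin q, (b t + i)) * ((i:ℝ)+1) :=
        mul_le_mul_of_nonneg_right hden (by linarith)
      have k3 : 2 * (z * Ca) ≤ Cb * ((i:ℝ)+1) := by
        have h7 : 2 * z * Ca / Cb < (i:ℝ) + 1 := lt_of_lt_of_le hM (by linarith)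
        rw [div_lt_iff₀ hCb0] at h7
        nlinarith
      nlinarith [mul_le_mul_of_nonneg_right k3 hpq0]
    · -- p = q + 1
      subst hpeq
      have hZ1 : Z < 1 := hZ rfl
      refine ⟨(1 + Z)/2, by linarith, by linarith, ?_⟩
      rcases eq_or_lt_of_le hz0 with hz | hz
      · -- z = 0
        filter_upwards with i
        rw [← hz]
        have hZ0 : 0 ≤ Z := (le_of_eq hz).trans hzZ
        simp
        linarith
      · have hZ0 : 0 < Z := lt_of_lt_of_le hz hzZ
        set R : ℕ → ℝ := fun i =>
          (∏ s : Fin (q + 1), (a s + i)) / ((∏ t : Fin q, (b t + i)) * (i + 1)) with hR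
        have hReq : ∀ i : ℕ, R i =
            (∏ t : Fin q, ((a t.castSucc + i) / (b t + i))) *
              ((a (Fin.last q) + i) / (1 + i)) := by
          intro i
          rw [hR]
          simp only
          have h3 : ((∏ t : Fin q, (b t + (i:ℝ))) * ((i:ℝ) + 1))
              = ((∏ t : Fin q, (b t + (i:ℝ))) * (1 + (i:ℝ))) := by ring
          rw [h3, Fin.prod_univ_castSucc, Finset.prod_div_distrib, div_mul_div_comm]
        have htend : Tendsto R atTop (nhds 1) := by
          rw [funext hReq]
          have h1 : Tendsto (fun i : ℕ => ∏ t : Fin q, ((a t.castSucc + i) / (b t + i)))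
              atTop (nhds (∏ _t : Fin q, (1:ℝ))) :=
            tendsto_finset_prod _ fun t _ => aux_one_ratio _ (hb t)
          have h2 : Tendsto (fun i : ℕ => (a (Fin.last q) + i) / (1 + i))
              atTop (nhds 1) := aux_one_ratio _ one_pos
          have := h1.mul h2
          simpa using this
        have hrZ : (1:ℝ) < ((1 + Z)/2) / Z := by
          rw [lt_div_iff₀ hZ0]; linarith
        have hevR : ∀ᶠ i : ℕ in atTop, R i < ((1 + Z)/2) / Z :=
          htend.eventually_lt_const hrZ
        filter_upwards [hevR] with i hi
        have hR0 : 0 ≤ R i := by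
          rw [hR]
          have h1 : (0:ℝ) ≤ ∏ s : Fin (q+1), (a s + i) :=
            Finset.prod_nonneg fun s _ => by have := ha s; positivity
          have h2 := hPb i
          positivity
        calc z * R i ≤ Z * R i := mul_le_mul_of_nonneg_right hzZ hR0
          _ ≤ Z * (((1 + Z)/2) / Z) := mul_le_mul_of_nonneg_left hi.le hZ0.le
          _ = (1 + Z)/2 := by field_simp
  apply summable_of_ratio_norm_eventually_le hr1
  filter_upwards [hev] with i hi
  rw [Real.norm_eq_abs, Real.norm_eq_abs, abs_of_nonneg (hfnn _), abs_of_nonneg (hfnn _),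
    hrec i]
  have h0 : 0 ≤ z * ((∏ s : Fin p, (a s + i)) / ((∏ t : Fin q, (b t + i)) * (i + 1))) := by
    have h1 : 0 ≤ ∏ s : Fin p, (a s + i) :=
      Finset.prod_nonneg fun s _ => by have := ha s; positivity
    have := hPb i
    positivity
  calc f i * (z * ((∏ s : Fin p, (a s + i)) / ((∏ t : Fin q, (b t + i)) * (i + 1))))
      ≤ f i * r := mul_le_mul_of_nonneg_left hi (hfnn i)
    _ = r * f i := mul_comm _ _


/-- Hyperdeterminantal total positivity of the generalized hypergeometric kernel. -/
theorem hyperDet_pFq_nonneg (p q : ℕ) (hpq : p ≤ q ∨ p = q + 1)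
    (a : Fin p → ℝ) (b : Fin q → ℝ) (ha : ∀ s, 0 ≤ a s) (hb : ∀ t, 0 < b t)
    (m n : ℕ) (hm : 0 < m) (hn : 0 < n)
    (x : Fin (2 * m) → Fin n → ℝ) (hanti : ∀ k, StrictAnti (x k))
    (hnonneg : ∀ k, 0 ≤ x k ⟨n - 1, by omega⟩)
    (hlt : p = q + 1 → (∏ k : Fin (2 * m), x k ⟨0, by omega⟩) < 1) :
    0 ≤ hyperDet m n (fun r => pFq p q a b (∏ k : Fin (2 * m), x k (r k))) := by
  have hnn' : ∀ k r, 0 ≤ x k r := by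
    intro k r
    refine le_trans (hnonneg k) ((hanti k).antitone ?_)
    rw [Fin.le_def]
    have := r.is_lt
    simp only []
    omega
  set c : ℕ → ℝ := fun i =>
    (∏ s : Fin p, risingFactorial (a s) i) / (∏ t : Fin q, risingFactorial (b t) i) with hc
  have hc0 : ∀ i, 0 ≤ c i := by
    intro i
    have h1 : 0 ≤ ∏ s : Fin p, risingFactorial (a s) i :=
      Finset.prod_nonneg fun s _ => risingFactorial_nonneg (ha s) i
    have h2 : 0 < ∏ t : Fin q, risingFactorial (b t) i :=
      Finset.prod_pos fun t _ => risingFactorial_pos (hb t) i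
    positivity
  set Z : ℝ := ∏ k : Fin (2 * m), x k ⟨0, by omega⟩ with hZ
  have hsum : ∀ r : Fin (2 * m) → Fin n,
      Summable (fun i : ℕ => c i * (∏ k : Fin (2 * m), x k (r k)) ^ i / (Nat.factorial i : ℝ)) := by
    intro r
    apply aux_summable p q hpq a b ha hb _ Z
    · exact Finset.prod_nonneg fun k _ => hnn' k (r k)
    · refine Finset.prod_le_prod (fun k _ => hnn' k (r k)) (fun k _ => ?_)
      refine (hanti k).antitone ?_
      rw [Fin.le_def]
      simp
    · exact hlt
  have hnonnegN : ∀ N : ℕ, 0 ≤ hyperDet m n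
      (fun r => ∑ i ∈ Finset.range N,
        c i * (∏ k : Fin (2 * m), x k (r k)) ^ i / (Nat.factorial i : ℝ)) := by
    intro N
    have heq : (fun r : Fin (2 * m) → Fin n => ∑ i ∈ Finset.range N,
        c i * (∏ k : Fin (2 * m), x k (r k)) ^ i / (Nat.factorial i : ℝ))
        = (fun r : Fin (2 * m) → Fin n => ∑ i ∈ Finset.range N,
          (c i / (Nat.factorial i : ℝ)) * ∏ k : Fin (2 * m), x k (r k) ^ i) := by
      funext r
      refine Finset.sum_congr rfl fun i _ => ?_
      rw [← Finset.prod_pow]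
      ring
    rw [heq]
    apply aux_hyperDet_poly_nonneg hm x hanti hnn'
    intro i
    have h1 : (0:ℝ) < Nat.factorial i := by exact_mod_cast Nat.factorial_pos i
    have := hc0 i
    positivity
  have htends : Filter.Tendsto (fun N : ℕ => hyperDet m n
      (fun r => ∑ i ∈ Finset.range N,
        c i * (∏ k : Fin (2 * m), x k (r k)) ^ i / (Nat.factorial i : ℝ)))
      Filter.atTop
      (nhds (hyperDet m n (fun r => pFq p q a b (∏ k : Fin (2 * m), x k (r k))))) := by
    simp only [hyperDet]
    apply Filter.Tendsto.const_mul
    apply tendsto_finset_sum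
    intro σ _
    apply Filter.Tendsto.const_mul
    apply tendsto_finset_prod
    intro j _
    exact (hsum (fun k => σ k j)).hasSum.tendsto_sum_nat
  exact ge_of_tendsto' htends hnonnegN
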